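/- arXiv:1003.3301 — 3 statements merged into one kernel-verified Lean document; each statement's English description precedes it below -/
import Mathlib

section
/- Let x1, x2 be points in R^d with 0 < ||x1 - x2|| < 2, and let (x1', x2') be as in the exclusion projection: x1' = x1 + ((2 - ||x1-x2||)/(2||x1-x2||))(x1 - x2), x2' = x2 - ((2 - ||x1-x2||)/(2||x1-x2||))(x1 - x2). Then for any pair (y1, y2) in R^d × R^d with ||y1 - y2|| ≥ 2, we have ||x1 - x1'||^2 + ||x2 - x2'||^2 ≤ ||x1 - y1||^2 + ||x2 - y2||^2. -/
theorem exclusion_projection_is_projection {d : ℕ}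
    (x1 x2 : EuclideanSpace ℝ (Fin d))
    (h0 : 0 < ‖x1 - x2‖) (h2 : ‖x1 - x2‖ < 2)
    (x1' x2' : EuclideanSpace ℝ (Fin d))
    (hx1' : x1' = x1 + ((2 - ‖x1 - x2‖) / (2 * ‖x1 - x2‖)) • (x1 - x2))
    (hx2' : x2' = x2 - ((2 - ‖x1 - x2‖) / (2 * ‖x1 - x2‖)) • (x1 - x2))
    (y1 y2 : EuclideanSpace ℝ (Fin d)) (hy : 2 ≤ ‖y1 - y2‖) :
    ‖x1 - x1'‖ ^ 2 + ‖x2 - x2'‖ ^ 2 ≤ ‖x1 - y1‖ ^ 2 + ‖x2 - y2‖ ^ 2 := by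
  set r := ‖x1 - x2‖ with hr
  set c := (2 - r) / (2 * r) with hc
  have hcnn : 0 ≤ c := by
    apply div_nonneg <;> nlinarith
  have h1 : ‖x1 - x1'‖ = c * r := by
    rw [hx1']
    have : x1 - (x1 + c • (x1 - x2)) = (-c) • (x1 - x2) := by
      rw [neg_smul]; abel
    rw [this, norm_smul, norm_neg, Real.norm_eq_abs, abs_of_nonneg hcnn]
  have h1' : ‖x2 - x2'‖ = c * r := by
    rw [hx2']
    have : x2 - (x2 - c • (x1 - x2)) = c • (x1 - x2) := by abel
    rw [this, norm_smul, Real.norm_eq_abs, abs_of_nonneg hcnn]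
  have hcr : c * r = (2 - r) / 2 := by
    field_simp [hc]
    rw [hc, div_mul_eq_mul_div, div_mul_eq_mul_div, div_eq_iff (ne_of_gt (by linarith))]
    ring
  have key : 2 - r ≤ ‖x1 - y1‖ + ‖x2 - y2‖ := by
    have t1 : ‖(x1 - y1) - (x2 - y2)‖ ≤ ‖x1 - y1‖ + ‖x2 - y2‖ := norm_sub_le _ _
    have t2 : ‖y1 - y2‖ - ‖x1 - x2‖ ≤ ‖(x1 - y1) - (x2 - y2)‖ := by
      have : (y1 - y2) = (x1 - x2) - ((x1 - y1) - (x2 - y2)) := by abel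
      calc ‖y1 - y2‖ - ‖x1 - x2‖ = ‖(x1 - x2) - ((x1 - y1) - (x2 - y2))‖ - ‖x1 - x2‖ := by
            rw [← this]
        _ ≤ ‖(x1 - y1) - (x2 - y2)‖ := by
            have := norm_sub_le (x1 - x2) ((x1 - y1) - (x2 - y2))
            linarith
    linarith
  have ha : 0 ≤ ‖x1 - y1‖ := norm_nonneg _
  have hb : 0 ≤ ‖x2 - y2‖ := norm_nonneg _
  rw [h1, h1', hcr]
  nlinarith [sq_nonneg (‖x1 - y1‖ - ‖x2 - y2‖), sq_nonneg (2 - r)]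
end

section
/- The density of the pentatope packing given by 4 pentatopes of edge length ||r1 - r2|| in a unit cell of volume |det M0| (with M0 as specified) equals 128/219, i.e., 4·vol(K1)/|det M0| = 128/219, where vol(K1) is the volume of the regular 4-simplex with vertices r1,…,r5. -/
noncomputable def pentR1 : Fin 4 → ℝ := fun _ => Real.sqrt 5
def pentR2 : Fin 4 → ℝ := ![3, -1, -1, -1]
def pentR3 : Fin 4 → ℝ := ![-1, 3, -1, -1]
def pentR4 : Fin 4 → ℝ := ![-1, -1, 3, -1]
def pentR5 : Fin 4 → ℝ := ![-1, -1, -1, 3]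

/-- Edge matrix of the regular 4-simplex `K1 = conv{r1,…,r5}`. -/
noncomputable def pentD : Matrix (Fin 4) (Fin 4) ℝ :=
  Matrix.of ![pentR2 - pentR1, pentR3 - pentR1, pentR4 - pentR1, pentR5 - pentR1]

/-- Generating matrix of the lattice of the pentatope packing. -/
noncomputable def pentM0 : Matrix (Fin 4) (Fin 4) ℝ :=
  (1 / 4 : ℝ) • Matrix.of ![![-6, 10, -6, 2], ![-8, -4, 4, 8], ![-7, 5, 9, -7], ![1, -7, 9, -3]] +
  (Real.sqrt 5 / 4) • Matrix.of ![![2, 2, 2, 2], ![2, 2, 2, 2], ![1, 1, 1, 1], ![3, 3, 3, 3]]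

theorem pentatope_packing_density :
    4 * (|pentD.det| / 24) / |pentM0.det| = 128 / 219 := by
  have hs : Real.sqrt 5 ^ 2 = 5 := Real.sq_sqrt (by norm_num)
  have hs0 : (0:ℝ) < Real.sqrt 5 := Real.sqrt_pos.mpr (by norm_num)
  have hD : pentD.det = -256 * Real.sqrt 5 := by
    simp [pentD, pentR1, pentR2, pentR3, pentR4, pentR5, Matrix.det_succ_row_zero, Fin.sum_univ_succ,
      Matrix.vecHead, Matrix.vecTail, Fin.succAbove, Fin.castSucc, Fin.castAdd, Fin.castLE,
      Pi.sub_apply]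
    ring_nf
  have hM : pentM0.det = 73 * Real.sqrt 5 := by
    simp [pentM0, Matrix.det_succ_row_zero, Fin.sum_univ_succ,
      Matrix.vecHead, Matrix.vecTail, Fin.succAbove, Fin.castSucc, Fin.castAdd, Fin.castLE,
      Matrix.add_apply, Matrix.smul_apply]
    ring_nf
  rw [hD, hM, abs_of_neg (by linarith), abs_of_pos (by positivity)]
  field_simp
  ring
end

section
/- Let σ̄_1, …, σ̄_d > 0 with Π σ̄_i > V for some V > 0. Then the minimization problem: minimize Σ_i (σ_i - σ̄_i)^2 over σ_1, …, σ_d ≥ 0 subject to Π σ_i ≤ V, has a minimizer, and at any minimizer the constraint is active: Π σ_i = V. -/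
open Finset

-- Activeness: at any minimizer the constraint must be active.
theorem svp_active (d : ℕ) (σbar : Fin d → ℝ) (hσbar : ∀ i, 0 < σbar i)
    (V : ℝ) (hV : 0 < V) (hprod : V < ∏ i, σbar i)
    (σ : Fin d → ℝ) (hσ : ∀ i, 0 ≤ σ i) (hle : (∏ i, σ i) ≤ V)
    (hmin : ∀ σ' : Fin d → ℝ, (∀ i, 0 ≤ σ' i) → (∏ i, σ' i) ≤ V →
      ∑ i, (σ i - σbar i) ^ 2 ≤ ∑ i, (σ' i - σbar i) ^ 2) :
    (∏ i, σ i) = V := by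
  classical
  by_contra hne
  have hlt : (∏ i, σ i) < V := lt_of_le_of_ne hle hne
  have hex : ∃ i, σ i ≠ σbar i := by
    by_contra h
    push_neg at h
    have heq : (∏ i, σ i) = ∏ i, σbar i := Finset.prod_congr rfl fun i _ => h i
    linarith
  obtain ⟨i, hi⟩ := hex
  set P : ℝ := ∏ j ∈ Finset.univ.erase i, σ j with hP
  have hP0 : 0 ≤ P := Finset.prod_nonneg fun j _ => hσ j
  have hprodσ : (∏ j, σ j) = σ i * P := (Finset.mul_prod_erase _ _ (mem_univ i)).symm
  set Δ : ℝ := σbar i - σ i with hΔdef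
  have hΔ : Δ ≠ 0 := sub_ne_zero.mpr (Ne.symm hi)
  set δ : ℝ := V - σ i * P with hδ
  have hδ0 : 0 < δ := by
    have := hprodσ ▸ hlt
    simp only [hδ]; linarith
  have hden : 0 < P * |Δ| + 1 := by positivity
  set t : ℝ := min 1 (δ / (P * |Δ| + 1)) with ht
  have ht0 : 0 < t := lt_min one_pos (div_pos hδ0 hden)
  have ht1 : t ≤ 1 := min_le_left _ _
  set σ' : Fin d → ℝ := Function.update σ i (σ i + t * Δ) with hσ'
  have hσ'nonneg : ∀ j, 0 ≤ σ' j := by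
    intro j
    rcases eq_or_ne j i with rfl | hji
    · simp only [hσ', Function.update_self]
      nlinarith [hσ j, (hσbar j).le, ht0.le, ht1]
    · simpa only [hσ', Function.update_of_ne hji] using hσ j
  have hprod' : (∏ j, σ' j) ≤ V := by
    have hval : (∏ j, σ' j) = (σ i + t * Δ) * P := by
      rw [hσ', Finset.prod_update_of_mem (mem_univ i), hP, Finset.erase_eq]
    rw [hval]
    have habs : Δ ≤ |Δ| := le_abs_self Δ
    have h1 : t * Δ * P ≤ t * (P * |Δ|) := by
      nlinarith [mul_le_mul_of_nonneg_right (mul_le_mul_of_nonneg_left habs ht0.le) hP0]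
    have h3 : t ≤ δ / (P * |Δ| + 1) := min_le_right _ _
    have h2 : t * (P * |Δ|) < δ := by
      calc t * (P * |Δ|) ≤ (δ / (P * |Δ| + 1)) * (P * |Δ|) :=
            mul_le_mul_of_nonneg_right h3 (by positivity)
        _ < δ := by
            rw [div_mul_eq_mul_div, div_lt_iff₀ hden]
            nlinarith [hδ0, mul_nonneg hP0 (abs_nonneg Δ)]
    nlinarith
  have hfless : ∑ j, (σ' j - σbar j) ^ 2 < ∑ j, (σ j - σbar j) ^ 2 := by
    have hsplit : ∀ g : Fin d → ℝ, ∑ j, (g j - σbar j) ^ 2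
        = (g i - σbar i) ^ 2 + ∑ j ∈ Finset.univ.erase i, (g j - σbar j) ^ 2 :=
      fun g => (Finset.add_sum_erase _ _ (mem_univ i)).symm
    rw [hsplit σ', hsplit σ]
    have heq : ∑ j ∈ Finset.univ.erase i, (σ' j - σbar j) ^ 2
        = ∑ j ∈ Finset.univ.erase i, (σ j - σbar j) ^ 2 := by
      refine Finset.sum_congr rfl fun j hj => ?_
      rw [hσ', Function.update_of_ne (Finset.ne_of_mem_erase hj)]
    rw [heq]
    have hterm : (σ' i - σbar i) ^ 2 < (σ i - σbar i) ^ 2 := by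
      have hvi : σ' i = σ i + t * Δ := by rw [hσ', Function.update_self]
      have hkey : σ' i - σbar i = (1 - t) * (σ i - σbar i) := by
        rw [hvi, hΔdef]; ring
      rw [hkey]
      have hne' : σ i - σbar i ≠ 0 := sub_ne_zero.mpr hi
      have hpos : 0 < (σ i - σbar i) ^ 2 :=
        lt_of_le_of_ne (sq_nonneg _) (Ne.symm (pow_ne_zero 2 hne'))
      nlinarith [ht0, ht1, hpos, mul_pos ht0 hpos]
    linarith
  have := hmin σ' hσ'nonneg hprod'
  linarith

theorem singular_value_projection_active_constraint (d : ℕ) (hd : 0 < d)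
    (σbar : Fin d → ℝ) (hσbar : ∀ i, 0 < σbar i)
    (V : ℝ) (hV : 0 < V) (hprod : V < ∏ i, σbar i) :
    (∃ σ : Fin d → ℝ, (∀ i, 0 ≤ σ i) ∧ (∏ i, σ i) ≤ V ∧
      ∀ σ' : Fin d → ℝ, (∀ i, 0 ≤ σ' i) → (∏ i, σ' i) ≤ V →
        ∑ i, (σ i - σbar i) ^ 2 ≤ ∑ i, (σ' i - σbar i) ^ 2) ∧
    (∀ σ : Fin d → ℝ, (∀ i, 0 ≤ σ i) → (∏ i, σ i) ≤ V →
      (∀ σ' : Fin d → ℝ, (∀ i, 0 ≤ σ' i) → (∏ i, σ' i) ≤ V →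
        ∑ i, (σ i - σbar i) ^ 2 ≤ ∑ i, (σ' i - σbar i) ^ 2) →
      (∏ i, σ i) = V) := by
  classical
  constructor
  · -- existence of a minimizer
    set f : (Fin d → ℝ) → ℝ := fun σ => ∑ i, (σ i - σbar i) ^ 2 with hf
    have hfcont : Continuous f :=
      continuous_finset_sum _ fun i _ => ((continuous_apply i).sub continuous_const).pow 2
    set S : Set (Fin d → ℝ) := {σ | (∀ i, 0 ≤ σ i) ∧ (∏ i, σ i) ≤ V} with hS
    set C : ℝ := f 0 with hC
    set K : Set (Fin d → ℝ) := S ∩ {σ | f σ ≤ C} with hK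
    have hSclosed : IsClosed S := by
      have hSeq : S = (⋂ i, {σ : Fin d → ℝ | 0 ≤ σ i}) ∩ {σ : Fin d → ℝ | (∏ i, σ i) ≤ V} := by
        ext x; simp [hS, Set.mem_iInter]
      rw [hSeq]
      have hpcont : Continuous fun σ : Fin d → ℝ => ∏ i, σ i :=
        continuous_finset_prod _ fun i _ => continuous_apply i
      exact (isClosed_iInter fun i =>
        isClosed_le continuous_const (continuous_apply i)).inter
        (isClosed_le hpcont continuous_const)
    have hKclosed : IsClosed K :=
      hSclosed.inter (isClosed_le hfcont continuous_const)
    have h0S : (0 : Fin d → ℝ) ∈ S := by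
      constructor
      · intro i; exact le_refl 0
      · have : (∏ i, (0 : Fin d → ℝ) i) = 0 :=
          Finset.prod_eq_zero (mem_univ ⟨0, hd⟩) rfl
        rw [this]; exact hV.le
    have h0K : (0 : Fin d → ℝ) ∈ K := ⟨h0S, show f 0 ≤ C from le_rfl⟩
    have hC0 : 0 ≤ C := Finset.sum_nonneg fun i _ => sq_nonneg _
    have hKsub : K ⊆ Metric.closedBall σbar (Real.sqrt C) := by
      intro σ hσK
      rw [Metric.mem_closedBall, dist_pi_le_iff (Real.sqrt_nonneg C)]
      intro i
      have h1 : (σ i - σbar i) ^ 2 ≤ C :=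
        le_trans (Finset.single_le_sum (fun j _ => sq_nonneg (σ j - σbar j)) (mem_univ i))
          hσK.2
      rw [Real.dist_eq]
      calc |σ i - σbar i| = Real.sqrt ((σ i - σbar i) ^ 2) := (Real.sqrt_sq_eq_abs _).symm
        _ ≤ Real.sqrt C := Real.sqrt_le_sqrt h1
    have hKcompact : IsCompact K :=
      (isCompact_closedBall σbar (Real.sqrt C)).of_isClosed_subset hKclosed hKsub
    obtain ⟨σ, hσK, hσmin⟩ := hKcompact.exists_isMinOn ⟨0, h0K⟩ hfcont.continuousOn
    refine ⟨σ, hσK.1.1, hσK.1.2, fun σ' hσ'0 hσ'V => ?_⟩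
    by_cases hc : f σ' ≤ C
    · exact hσmin ⟨⟨hσ'0, hσ'V⟩, hc⟩
    · have h1 : f σ ≤ C := hσK.2
      have h2 : C ≤ f σ' := le_of_not_ge hc
      exact le_trans h1 h2
  · intro σ hσ hle hmin
    exact svp_active d σbar hσbar V hV hprod σ hσ hle hmin
end
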